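/- For an odd integer n > 1 whose canonical factorization has exactly q distinct prime factors, the number of primitive Pythagorean triples (n, y, z) (i.e. with gcd(n, y, z) = 1 and n^2 + y^2 = z^2, y, z positive integers) equals 2^{q-1}. -/

import Mathlib

open Finset

private lemma unitary_fact {m d : ℕ} (hm : m ≠ 0) (hd : d ∣ m)
    (hc : Nat.Coprime d (m / d)) :
    d.factorization = m.factorization.filter (· ∈ d.primeFactors) := by
  have hd0 : d ≠ 0 := by rintro rfl; exact hm (Nat.eq_zero_of_zero_dvd hd)
  have hq0 : m / d ≠ 0 := (Nat.div_ne_zero_iff).2 ⟨hd0, Nat.le_of_dvd (Nat.pos_of_ne_zero hm) hd⟩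
  have hmul : m = d * (m / d) := (Nat.mul_div_cancel' hd).symm
  have hfm : m.factorization = d.factorization + (m / d).factorization := by
    conv_lhs => rw [hmul]
    exact Nat.factorization_mul hd0 hq0
  ext p
  rw [Finsupp.filter_apply]
  by_cases hp : p ∈ d.primeFactors
  · simp only [hp, if_true]
    have hpd : p ∣ d := Nat.dvd_of_mem_primeFactors hp
    have hpnd : ¬ p ∣ (m / d) := by
      intro h
      have h1 : p ∣ 1 := hc ▸ Nat.dvd_gcd hpd h
      exact (Nat.prime_of_mem_primeFactors hp).one_lt.ne' (Nat.eq_one_of_dvd_one h1)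
    rw [hfm, Finsupp.add_apply, Nat.factorization_eq_zero_of_not_dvd hpnd, add_zero]
  · simp only [hp, if_false]
    exact Finsupp.notMem_support_iff.mp (by rwa [Nat.support_factorization])

private lemma unitary_card (m : ℕ) (hm : m ≠ 0) :
    ((m.divisors).filter (fun d => Nat.Coprime d (m / d))).card
      = 2 ^ m.primeFactors.card := by
  rw [← Finset.card_powerset]
  apply Finset.card_nbij' (fun d => d.primeFactors)
      (fun s => (m.factorization.filter (· ∈ s)).prod (· ^ ·))
  · intro d hd
    simp only [Finset.mem_coe, Finset.mem_filter, Nat.mem_divisors] at hd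
    exact Finset.mem_powerset.2 (Nat.primeFactors_mono hd.1.1 hm)
  · intro s hs
    rw [Finset.mem_coe, Finset.mem_powerset] at hs
    set f := m.factorization.filter (· ∈ s) with hf
    have hsupp : f.support = s := by
      rw [hf, Finsupp.support_filter, Nat.support_factorization]
      ext p
      simp only [Finset.mem_filter]
      exact ⟨fun h => h.2, fun h => ⟨hs h, h⟩⟩
    have hprime : ∀ p ∈ f.support, Nat.Prime p := by
      intro p hp
      rw [hsupp] at hp
      exact Nat.prime_of_mem_primeFactors (hs hp)
    set d := f.prod (· ^ ·) with hdd
    have hfact : d.factorization = f := Nat.prod_pow_factorization_eq_self hprime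
    have hd0 : d ≠ 0 := by
      rw [hdd, Finsupp.prod]
      exact Finset.prod_ne_zero_iff.2 fun p hp =>
        pow_ne_zero _ (hprime p hp).ne_zero

    have hle : f ≤ m.factorization := by
      intro p
      rw [hf, Finsupp.filter_apply]
      split <;> simp
    have hdvd : d ∣ m := (Nat.factorization_le_iff_dvd hd0 hm).1 (hfact ▸ hle)
    have hq0 : m / d ≠ 0 :=
      (Nat.div_ne_zero_iff).2 ⟨hd0, Nat.le_of_dvd (Nat.pos_of_ne_zero hm) hdvd⟩
    have hcop : Nat.Coprime d (m / d) := by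
      rw [← Nat.disjoint_primeFactors hd0 hq0]
      rw [Finset.disjoint_left]
      intro p hp hp2
      rw [← Nat.support_factorization, hfact, hsupp] at hp
      rw [← Nat.support_factorization, Nat.factorization_div hdvd, hfact,
        Finsupp.mem_support_iff, Finsupp.tsub_apply] at hp2
      apply hp2
      rw [hf, Finsupp.filter_apply, if_pos hp]
      omega
    exact Finset.mem_filter.2 ⟨Nat.mem_divisors.2 ⟨hdvd, hm⟩, hcop⟩
  · intro d hd
    simp only [Finset.mem_coe, Finset.mem_filter, Nat.mem_divisors] at hd
    have hd0 : d ≠ 0 := by rintro rfl; exact hm (Nat.eq_zero_of_zero_dvd hd.1.1)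
    beta_reduce
    rw [← unitary_fact hm hd.1.1 hd.2, Nat.factorization_prod_pow_eq_self hd0]
  · intro s hs
    rw [Finset.mem_coe, Finset.mem_powerset] at hs
    set f := m.factorization.filter (· ∈ s) with hf
    have hsupp : f.support = s := by
      rw [hf, Finsupp.support_filter, Nat.support_factorization]
      ext p
      simp only [Finset.mem_filter]
      exact ⟨fun h => h.2, fun h => ⟨hs h, h⟩⟩
    have hprime : ∀ p ∈ f.support, Nat.Prime p := by
      intro p hp
      rw [hsupp] at hp
      exact Nat.prime_of_mem_primeFactors (hs hp)
    beta_reduce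
    rw [← Nat.support_factorization, Nat.prod_pow_factorization_eq_self hprime, hsupp]

theorem stmt_9 (n : ℕ) (hn : Odd n) (hn1 : 1 < n) (q : ℕ)
    (hq : n.primeFactors.card = q) :
    {p : ℕ × ℕ | 0 < p.1 ∧ 0 < p.2 ∧ n ^ 2 + p.1 ^ 2 = p.2 ^ 2 ∧
        Nat.gcd n (Nat.gcd p.1 p.2) = 1}.ncard = 2 ^ (q - 1) := by
  subst hq
  set m := n ^ 2 with hm
  have hn0 : 0 < n := by omega
  have hm0 : m ≠ 0 := by positivity
  have hmodd : Odd m := hn.pow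
  have hodd_dvd : ∀ x, x ∣ m → x % 2 = 1 := by
    intro x hx
    rcases Nat.even_or_odd x with hx2 | hx2
    · exfalso
      obtain ⟨c, hc⟩ := hx
      exact Nat.not_odd_iff_even.mpr (hc ▸ hx2.mul_right c) hmodd
    · exact Nat.odd_iff.mp hx2
  set U := m.divisors.filter (fun d => Nat.Coprime d (m / d)) with hU
  set A := U.filter (fun d => d < n) with hA
  set B := U.filter (fun d => n < d) with hB
  -- basic facts about elements of U
  have hUmem : ∀ d ∈ U, d ∣ m ∧ 0 < d ∧ Nat.Coprime d (m / d) := by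
    intro d hd
    simp only [hU, Finset.mem_filter, Nat.mem_divisors] at hd
    exact ⟨hd.1.1, Nat.pos_of_dvd_of_pos hd.1.1 (Nat.pos_of_ne_zero hm0), hd.2⟩
  have hdne : ∀ d ∈ U, d ≠ n := by
    intro d hd hdn
    obtain ⟨hdvd, hdpos, hcop⟩ := hUmem d hd
    subst hdn
    have : m / d = d := by rw [hm, pow_two, Nat.mul_div_cancel_left _ hdpos]
    rw [this] at hcop
    have h2 := Nat.gcd_self d
    rw [Nat.Coprime] at hcop
    omega
  -- the involution d ↦ m / d swaps A and B
  have hswap : ∀ d ∈ U, m / d ∈ U ∧ m / (m / d) = d := by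
    intro d hd
    obtain ⟨hdvd, hdpos, hcop⟩ := hUmem d hd
    have hqdvd : m / d ∣ m := Nat.div_dvd_of_dvd hdvd
    have hself : m / (m / d) = d := Nat.div_div_self hdvd hm0
    refine ⟨Finset.mem_filter.2 ⟨Nat.mem_divisors.2 ⟨hqdvd, hm0⟩, ?_⟩, hself⟩
    rw [hself]
    exact hcop.symm
  have hlt : ∀ d ∈ U, d < n → n < m / d := by
    intro d hd hdn
    obtain ⟨hdvd, hdpos, hcop⟩ := hUmem d hd
    have hde : d * (m / d) = m := Nat.mul_div_cancel' hdvd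
    by_contra h
    push_neg at h
    have : d * (m / d) < n * n := by
      calc d * (m / d) ≤ d * n := Nat.mul_le_mul_left d h
        _ < n * n := (Nat.mul_lt_mul_right hn0).2 hdn
    rw [hde, hm, pow_two] at this
    omega
  have hgt : ∀ d ∈ U, n < d → m / d < n := by
    intro d hd hdn
    obtain ⟨hdvd, hdpos, hcop⟩ := hUmem d hd
    have hde : d * (m / d) = m := Nat.mul_div_cancel' hdvd
    by_contra h
    push_neg at h
    have : n * n < d * (m / d) := by
      calc n * n ≤ n * (m / d) := Nat.mul_le_mul_left n h
        _ < d * (m / d) := by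
            have hq : m / d ∣ m := Nat.div_dvd_of_dvd hdvd
            have hqpos : 0 < m / d := Nat.pos_of_dvd_of_pos hq (Nat.pos_of_ne_zero hm0)
            exact (Nat.mul_lt_mul_right hqpos).2 hdn
    rw [hde, hm, pow_two] at this
    omega
  have hcardAB : A.card = B.card := by
    apply Finset.card_nbij' (fun d => m / d) (fun d => m / d)
    · intro d hd
      rw [hA, Finset.mem_coe, Finset.mem_filter] at hd
      exact Finset.mem_filter.2 ⟨(hswap d hd.1).1, hlt d hd.1 hd.2⟩
    · intro d hd
      rw [hB, Finset.mem_coe, Finset.mem_filter] at hd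
      exact Finset.mem_filter.2 ⟨(hswap d hd.1).1, hgt d hd.1 hd.2⟩
    · intro d hd
      rw [hA, Finset.mem_coe, Finset.mem_filter] at hd
      exact (hswap d hd.1).2
    · intro d hd
      rw [hB, Finset.mem_coe, Finset.mem_filter] at hd
      exact (hswap d hd.1).2
  have hunion : A ∪ B = U := by
    ext d
    simp only [hA, hB, Finset.mem_union, Finset.mem_filter]
    constructor
    · rintro (⟨h, _⟩ | ⟨h, _⟩) <;> exact h
    · intro h
      rcases lt_or_gt_of_ne (hdne d h) with h2 | h2
      · exact Or.inl ⟨h, h2⟩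
      · exact Or.inr ⟨h, h2⟩
  have hdisj : Disjoint A B := by
    rw [Finset.disjoint_left]
    intro d hd hd2
    rw [hA, Finset.mem_filter] at hd
    rw [hB, Finset.mem_filter] at hd2
    omega
  have hUcard : U.card = 2 ^ n.primeFactors.card := by
    rw [hU, unitary_card m hm0, hm, Nat.primeFactors_pow n (by norm_num)]
  have hq1 : 1 ≤ n.primeFactors.card :=
    Finset.Nonempty.card_pos (Nat.nonempty_primeFactors.2 hn1)
  have hAcard : A.card = 2 ^ (n.primeFactors.card - 1) := by
    have h2 : A.card + B.card = 2 ^ n.primeFactors.card := by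
      rw [← Finset.card_union_of_disjoint hdisj, hunion, hUcard]
    have h3 : 2 ^ n.primeFactors.card = 2 * 2 ^ (n.primeFactors.card - 1) := by
      rw [← pow_succ']
      congr 1
      omega
    omega
  -- now the bijection with the solution set
  have hSeq : {p : ℕ × ℕ | 0 < p.1 ∧ 0 < p.2 ∧ n ^ 2 + p.1 ^ 2 = p.2 ^ 2 ∧
        Nat.gcd n (Nat.gcd p.1 p.2) = 1}
      = ↑(A.image (fun d => ((m / d - d) / 2, (m / d - d) / 2 + d))) := by
    ext ⟨y, z⟩
    simp only [Set.mem_setOf_eq, Finset.coe_image, Set.mem_image, Finset.mem_coe]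
    constructor
    · rintro ⟨hy, hz, heq, hgcd⟩
      have hzy : y < z := by
        by_contra h
        push_neg at h
        have h2 : z ^ 2 ≤ y ^ 2 := Nat.pow_le_pow_left h 2
        have h3 : 0 < n ^ 2 := by positivity
        omega
      obtain ⟨a, ha, hapos⟩ : ∃ a, z = y + a ∧ 0 < a := ⟨z - y, by omega, by omega⟩
      have hr : (y + a) ^ 2 = y ^ 2 + a * (y + (y + a)) := by ring
      have heq' : n ^ 2 + y ^ 2 = y ^ 2 + a * (y + (y + a)) := by
        rw [ha] at heq; rw [heq]; exact hr
      have hma : n ^ 2 = a * (y + z) := by rw [ha]; linarith [heq']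
      have hadvd : a ∣ m := by rw [hm, hma]; exact Dvd.intro _ rfl
      have hme : m / a = y + z := by
        rw [hm, hma, Nat.mul_div_cancel_left _ hapos]
      have hcop : Nat.Coprime a (y + z) := by
        by_contra hg
        obtain ⟨p, hp, hpd⟩ := Nat.exists_prime_and_dvd hg
        have hpa : p ∣ a := hpd.trans (Nat.gcd_dvd_left _ _)
        have hpe : p ∣ y + z := hpd.trans (Nat.gcd_dvd_right _ _)
        have hpn : p ∣ n := hp.dvd_of_dvd_pow (show p ∣ n ^ 2 by
          rw [hma]; exact Dvd.dvd.mul_right hpa _)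
        have hp2 : p ≠ 2 := by
          rintro rfl
          exact Nat.not_odd_iff_even.mpr ((even_iff_two_dvd).2 hpn) hn
        have hnot2 : ¬ p ∣ 2 := by
          intro h
          exact hp2 ((Nat.prime_dvd_prime_iff_eq hp Nat.prime_two).1 h)
        have hpy : p ∣ y := by
          have h2y : p ∣ 2 * y := by
            have he2 : 2 * y = (y + z) - a := by omega
            rw [he2]
            exact Nat.dvd_sub hpe hpa
          rcases (Nat.Prime.dvd_mul hp).1 h2y with h | h
          · exact absurd h hnot2
          · exact h
        have hpz : p ∣ z := by
          have h2z : p ∣ 2 * z := by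
            have he2 : 2 * z = (y + z) + a := by omega
            rw [he2]
            exact Nat.dvd_add hpe hpa
          rcases (Nat.Prime.dvd_mul hp).1 h2z with h | h
          · exact absurd h hnot2
          · exact h
        have : p ∣ 1 := hgcd ▸ Nat.dvd_gcd hpn (Nat.dvd_gcd hpy hpz)
        exact hp.one_lt.ne' (Nat.eq_one_of_dvd_one this)
      have han : a < n := by
        by_contra h
        push_neg at h
        have h1 : n * n ≤ a * a := Nat.mul_le_mul h h
        have h2 : a * a < a * (y + z) := by
          apply (Nat.mul_lt_mul_left hapos).2
          omega
        rw [← hma] at h2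
        rw [pow_two] at h2
        omega
      refine ⟨a, ?_, ?_⟩
      · rw [hA, Finset.mem_filter]
        refine ⟨Finset.mem_filter.2 ⟨Nat.mem_divisors.2 ⟨hadvd, hm0⟩, ?_⟩, han⟩
        rw [hme]
        exact hcop
      · rw [hme, Prod.mk.injEq]
        constructor <;> omega
    · rintro ⟨d, hd, heq2⟩
      rw [hA, Finset.mem_filter] at hd
      obtain ⟨hdU, hdn⟩ := hd
      obtain ⟨hdvd, hdpos, hcop⟩ := hUmem d hdU
      set e := m / d with he
      have hde : d * e = m := Nat.mul_div_cancel' hdvd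
      have hne : n < e := hlt d hdU hdn
      have hd2 : d % 2 = 1 := hodd_dvd d hdvd
      have he2 : e % 2 = 1 := hodd_dvd e (Nat.div_dvd_of_dvd hdvd)
      obtain ⟨hy, hz⟩ : y = (e - d) / 2 ∧ z = (e - d) / 2 + d := by
        rw [Prod.mk.injEq] at heq2
        exact ⟨heq2.1.symm, heq2.2.symm⟩
      have hyz : z = y + d := by omega
      have h2y : 2 * y + d = e := by omega
      have hypos : 0 < y := by omega
      refine ⟨hypos, by omega, ?_, ?_⟩
      · have hzz : z ^ 2 = y ^ 2 + d * (2 * y + d) := by rw [hyz]; ring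
        rw [hzz, h2y]
        have : n ^ 2 = d * e := by rw [hde, hm]
        linarith
      · by_contra hg
        obtain ⟨p, hp, hpd⟩ := Nat.exists_prime_and_dvd hg
        have hpn : p ∣ n := hpd.trans (Nat.gcd_dvd_left _ _)
        have hpy : p ∣ y := (hpd.trans (Nat.gcd_dvd_right _ _)).trans (Nat.gcd_dvd_left _ _)
        have hpz : p ∣ z := (hpd.trans (Nat.gcd_dvd_right _ _)).trans (Nat.gcd_dvd_right _ _)
        have hpd' : p ∣ d := by
          have : d = z - y := by omega
          rw [this]
          exact Nat.dvd_sub hpz hpy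
        have hpe : p ∣ e := by
          rw [← h2y]
          exact Nat.dvd_add (Dvd.dvd.mul_left hpy 2) hpd'
        have : p ∣ 1 := hcop ▸ Nat.dvd_gcd hpd' hpe
        exact hp.one_lt.ne' (Nat.eq_one_of_dvd_one this)
  rw [hSeq, Set.ncard_coe_finset]
  rw [Finset.card_image_of_injective _ ?_, hAcard]
  intro d1 d2 h
  rw [Prod.mk.injEq] at h
  omega
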